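/- Let a > 0, b > 0 and α, β ∈ [0, 1). Every complex eigenvalue of the 2×2 matrix [[-(1-α) a, 1-α], [(1-β) b, 0]] (the Jacobian of the Lozi system with constant VMTOC control (α, β) on the half-plane x > 0) has modulus strictly less than 1 if and only if (1-α) a + (1-α)(1-β) b < 1. -/

import Mathlib

/-- **Local stability condition for the controlled Lozi map.**
Let `a, b > 0` and `α, β ∈ [0,1)`. All complex eigenvalues of the Jacobian
`[[-(1-α) a, 1-α], [(1-β) b, 0]]` of the Lozi system with constant VMTOC control
`(α, β)` on the half-plane `x > 0` lie strictly inside the unit circle if and only if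
`(1-α) a + (1-α)(1-β) b < 1`. -/
theorem lozi_vmtoc_jacobian_stable_iff
    (a b α β : ℝ) (ha : 0 < a) (hb : 0 < b)
    (hα : α ∈ Set.Ico (0 : ℝ) 1) (hβ : β ∈ Set.Ico (0 : ℝ) 1)
    (M : Matrix (Fin 2) (Fin 2) ℝ)
    (hM : M = !![-(1 - α) * a, 1 - α; (1 - β) * b, 0]) :
    (∀ lam : ℂ, lam ^ 2 - (M.trace : ℂ) * lam + (M.det : ℂ) = 0 → ‖lam‖ < 1) ↔
    (1 - α) * a + (1 - α) * (1 - β) * b < 1 := by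
  obtain ⟨hα0, hα1⟩ := hα
  obtain ⟨hβ0, hβ1⟩ := hβ
  have hα1' : 0 < 1 - α := by linarith
  have hβ1' : 0 < 1 - β := by linarith
  set p : ℝ := (1 - α) * a with hp
  set q : ℝ := (1 - α) * (1 - β) * b with hq
  have hp0 : 0 < p := by positivity
  have hq0 : 0 < q := by positivity
  have htr : M.trace = -p := by
    rw [hM, Matrix.trace_fin_two]
    simp [Matrix.cons_val', Matrix.cons_val_zero, Matrix.cons_val_one]
    ring
  have hdet : M.det = -q := by
    rw [hM, Matrix.det_fin_two]
    simp [Matrix.cons_val', Matrix.cons_val_zero, Matrix.cons_val_one]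
    ring
  set s : ℝ := Real.sqrt (p ^ 2 + 4 * q) with hs
  have hs0 : 0 ≤ s := Real.sqrt_nonneg _
  have hs2 : s ^ 2 = p ^ 2 + 4 * q := Real.sq_sqrt (by positivity)
  set r₁ : ℝ := (-p + s) / 2 with hr₁
  set r₂ : ℝ := (-p - s) / 2 with hr₂
  have hsC : ((s : ℂ)) ^ 2 = (p : ℂ) ^ 2 + 4 * (q : ℂ) := by exact_mod_cast congrArg Complex.ofReal hs2
  have hfact : ∀ lam : ℂ, lam ^ 2 - (M.trace : ℂ) * lam + (M.det : ℂ)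
      = (lam - (r₁ : ℂ)) * (lam - (r₂ : ℂ)) := by
    intro lam
    rw [htr, hdet, hr₁, hr₂]
    push_cast
    linear_combination ((1 : ℂ)/4) * hsC
  constructor
  · intro h
    have h2 := h (r₂ : ℂ) (by rw [hfact]; simp)
    rw [Complex.norm_real, Real.norm_eq_abs] at h2
    have h3 := abs_lt.mp h2
    have hsl : s < 2 - p := by
      have := h3.1
      rw [hr₂] at this
      linarith
    nlinarith [hs2, hs0]
  · intro h lam hlam
    rw [hfact, mul_eq_zero, sub_eq_zero, sub_eq_zero] at hlam
    have hr1 : |r₁| < 1 := by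
      rw [abs_lt, hr₁]
      constructor
      · nlinarith
      · nlinarith [hs2, hs0, sq_nonneg (s - p - 2)]
    have hr2 : |r₂| < 1 := by
      rw [abs_lt, hr₂]
      constructor
      · nlinarith [hs2, hs0, sq_nonneg (s - (2 - p))]
      · nlinarith
    rcases hlam with h1 | h1 <;> rw [h1, Complex.norm_real, Real.norm_eq_abs]
    · exact hr1
    · exact hr2
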